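/- arXiv:2303.01709 — 2 statements merged into one kernel-verified Lean document; each statement's English description precedes it below -/
import Mathlib

section
/- For all p in [0,1], the binary entropy function H(p) = -p·log₂(p) - (1-p)·log₂(1-p) satisfies 4p(1-p) ≤ H(p) ≤ 2·√(p(1-p)). -/
/-- The binary entropy function `H(p) = -p·log₂ p - (1-p)·log₂(1-p)`
(with the convention `0·log₂ 0 = 0`, automatic since `Real.logb 2 0 = 0`). -/
noncomputable def binEntropy (p : ℝ) : ℝ :=
  -(p * Real.logb 2 p) - (1 - p) * Real.logb 2 (1 - p)

namespace BE

noncomputable def F (p : ℝ) : ℝ := Real.binEntropy p - 4 * Real.log 2 * (p * (1 - p))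
noncomputable def psi (p : ℝ) : ℝ :=
  (Real.log (1 - p) - Real.log p) - 4 * Real.log 2 * (1 - 2 * p)
noncomputable def G (p : ℝ) : ℝ := 2 * Real.log 2 * Real.sqrt (p * (1 - p)) - Real.binEntropy p
noncomputable def phi (p : ℝ) : ℝ :=
  Real.log 2 * ((1 - 2 * p) / Real.sqrt (p * (1 - p))) - (Real.log (1 - p) - Real.log p)
noncomputable def Dphi (p : ℝ) : ℝ :=
  (1 / (p * (1 - p))) * (1 - Real.log 2 / (2 * Real.sqrt (p * (1 - p))))

lemma l2pos : (0:ℝ) < Real.log 2 := Real.log_pos one_lt_two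
lemma l2gt : (0.6:ℝ) < Real.log 2 := lt_trans (by norm_num) Real.log_two_gt_d9
lemma l2lt : Real.log 2 < 0.7 := lt_trans Real.log_two_lt_d9 (by norm_num)

lemma hasDerivAt_u (p : ℝ) : HasDerivAt (fun x : ℝ => x * (1 - x)) (1 - 2 * p) p := by
  have h := (hasDerivAt_id p).mul ((hasDerivAt_const p (1:ℝ)).sub (hasDerivAt_id p))
  refine h.congr_deriv (Eq.symm ?_); simp; ring

lemma hasDerivAt_F {p : ℝ} (h0 : 0 < p) (h1 : p < 1) : HasDerivAt F (psi p) p := by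
  have hb := Real.hasDerivAt_binEntropy h0.ne' (by linarith)
  have hu := (hasDerivAt_u p).const_mul (4 * Real.log 2)
  have := hb.sub hu
  exact this

lemma hasDerivAt_psi {p : ℝ} (h0 : 0 < p) (h1 : p < 1) :
    HasDerivAt psi (8 * Real.log 2 - (1 - p)⁻¹ - p⁻¹) p := by
  have hl1 : HasDerivAt (fun x : ℝ => Real.log (1 - x)) (-(1 - p)⁻¹) p := by
    have := (Real.hasDerivAt_log (by linarith : (1:ℝ) - p ≠ 0)).comp p
      ((hasDerivAt_const p (1:ℝ)).sub (hasDerivAt_id p))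
    refine this.congr_deriv (Eq.symm ?_); simp
  have hl2 : HasDerivAt (fun x : ℝ => Real.log x) p⁻¹ p := Real.hasDerivAt_log h0.ne'
  have hlin : HasDerivAt (fun x : ℝ => 4 * Real.log 2 * (1 - 2 * x)) (-(8 * Real.log 2)) p := by
    have := ((hasDerivAt_const p (1:ℝ)).sub ((hasDerivAt_id p).const_mul 2)).const_mul
      (4 * Real.log 2)
    refine this.congr_deriv (Eq.symm ?_); simp; ring
  have := (hl1.sub hl2).sub hlin
  refine this.congr_deriv (Eq.symm ?_); ring

lemma hasDerivAt_sqrtu {p : ℝ} (h0 : 0 < p) (h1 : p < 1) :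
    HasDerivAt (fun x : ℝ => Real.sqrt (x * (1 - x)))
      ((1 - 2 * p) / (2 * Real.sqrt (p * (1 - p)))) p := by
  have hu : (0:ℝ) < p * (1 - p) := by nlinarith
  have := (Real.hasDerivAt_sqrt hu.ne').comp p (hasDerivAt_u p)
  refine this.congr_deriv (Eq.symm ?_)
  field_simp

lemma hasDerivAt_G {p : ℝ} (h0 : 0 < p) (h1 : p < 1) : HasDerivAt G (phi p) p := by
  have hb := Real.hasDerivAt_binEntropy h0.ne' (by linarith)
  have hs := (hasDerivAt_sqrtu h0 h1).const_mul (2 * Real.log 2)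
  have := hs.sub hb
  refine this.congr_deriv (Eq.symm ?_)
  unfold phi
  have hu : (0:ℝ) < p * (1 - p) := by nlinarith
  have hsq : Real.sqrt (p * (1 - p)) ≠ 0 := by positivity
  field_simp

lemma hasDerivAt_phi {p : ℝ} (h0 : 0 < p) (h1 : p < 1) : HasDerivAt phi (Dphi p) p := by
  have hu : (0:ℝ) < p * (1 - p) := by nlinarith
  have hs : (0:ℝ) < Real.sqrt (p * (1 - p)) := Real.sqrt_pos.2 hu
  have hss : Real.sqrt (p * (1 - p)) * Real.sqrt (p * (1 - p)) = p * (1 - p) :=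
    Real.mul_self_sqrt hu.le
  have hnum : HasDerivAt (fun x : ℝ => 1 - 2 * x) (-2 : ℝ) p := by
    have := (hasDerivAt_const p (1:ℝ)).sub ((hasDerivAt_id p).const_mul 2)
    refine this.congr_deriv (Eq.symm ?_)
    simp
  have hq := (hnum.div (hasDerivAt_sqrtu h0 h1) hs.ne').const_mul (Real.log 2)
  have hl1 : HasDerivAt (fun x : ℝ => Real.log (1 - x)) (-(1 - p)⁻¹) p := by
    have := (Real.hasDerivAt_log (by linarith : (1:ℝ) - p ≠ 0)).comp p
      ((hasDerivAt_const p (1:ℝ)).sub (hasDerivAt_id p))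
    refine this.congr_deriv (Eq.symm ?_); simp
  have hl2 := Real.hasDerivAt_log h0.ne'
  have := hq.sub (hl1.sub hl2)
  refine this.congr_deriv (Eq.symm ?_)
  unfold Dphi
  set s := Real.sqrt (p*(1-p)) with hsdef
  have e2 : -2 * s - (1 - 2*p) * ((1 - 2*p) / (2 * s)) = -(1 / (2 * s)) := by
    field_simp
    linear_combination (-4) * hss
  have e3 : s ^ 2 = p * (1 - p) := by rw [sq]; exact hss
  rw [e2, e3]
  have h1p : (1:ℝ) - p ≠ 0 := by linarith
  field_simp
  ring

/-- Key structural lemma: if `f` vanishes at `0` and `1/2`, has derivative `f'` on `(0,1)`,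
`f'` is monotone on `[c,1/2]` with `f' (1/2) = 0`, and `f` is strictly concave on `[0,c]`,
then `f ≥ 0` on `[0,1/2]`. -/
lemma key (f f' : ℝ → ℝ) (c : ℝ) (hc0 : 0 < c) (hc2 : c < 1/2)
    (hf : ∀ q : ℝ, 0 < q → q < 1 → HasDerivAt f (f' q) q)
    (hcont : ContinuousOn f (Set.Icc 0 (1/2)))
    (hf'half : f' (1/2) = 0)
    (hmono : MonotoneOn f' (Set.Icc c (1/2)))
    (hconc : StrictConcaveOn ℝ (Set.Icc 0 c) f)
    (hf0 : f 0 = 0) (hfhalf : f (1/2) = 0)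
    {p : ℝ} (hp0 : 0 ≤ p) (hp2 : p ≤ 1/2) : 0 ≤ f p := by
  have hanti : AntitoneOn f (Set.Icc c (1/2)) := by
    apply antitoneOn_of_deriv_nonpos (convex_Icc c (1/2))
      (hcont.mono (fun x hx => ⟨le_trans hc0.le hx.1, hx.2⟩))
    · rw [interior_Icc]
      intro x hx
      exact ((hf x (hc0.trans hx.1) (by linarith [hx.2])).differentiableAt).differentiableWithinAt
    · rw [interior_Icc]
      intro x hx
      rw [(hf x (hc0.trans hx.1) (by linarith [hx.2])).deriv]
      have h := hmono ⟨hx.1.le, hx.2.le⟩ ⟨hc2.le, le_refl _⟩ hx.2.le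
      rw [hf'half] at h
      exact h
  have hBge : ∀ x ∈ Set.Icc c (1/2), 0 ≤ f x := by
    intro x hx
    have := hanti hx ⟨hc2.le, le_refl _⟩ hx.2
    rw [hfhalf] at this
    exact this
  rcases le_total c p with hcp | hpc
  · exact hBge p ⟨hcp, hp2⟩
  · have hfc : 0 ≤ f c := hBge c ⟨le_refl _, hc2.le⟩
    rcases eq_or_lt_of_le hp0 with h0 | h0
    · rw [← h0, hf0]
    · set t := p / c with ht
      have ht0 : 0 < t := div_pos h0 hc0
      have ht1 : t ≤ 1 := (div_le_one hc0).2 hpc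
      have hcomb := hconc.concaveOn.2 (Set.mem_Icc.2 ⟨le_refl 0, hc0.le⟩)
        (Set.mem_Icc.2 ⟨hc0.le, le_refl c⟩) (by linarith : (0:ℝ) ≤ 1 - t) ht0.le
        (by ring : (1 - t) + t = 1)
      have hpt : (1 - t) • (0:ℝ) + t • c = p := by
        simp only [smul_eq_mul, mul_zero, zero_add]
        exact div_mul_cancel₀ p hc0.ne'
      rw [hpt] at hcomb
      simp only [smul_eq_mul, hf0, mul_zero, zero_add] at hcomb
      nlinarith [hcomb, mul_nonneg ht0.le hfc]

noncomputable def aF : ℝ := (1 - Real.sqrt (1 - 1 / (2 * Real.log 2))) / 2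
noncomputable def bG : ℝ := (1 - Real.sqrt (1 - Real.log 2 ^ 2)) / 2

lemma aF_facts : 0 < aF ∧ aF < 1/2 ∧ aF * (1 - aF) = 1 / (8 * Real.log 2) := by
  have h2 := l2gt; have h3 := l2lt; have h1 := l2pos
  have hin0 : (0:ℝ) < 1 - 1 / (2 * Real.log 2) := by
    rw [sub_pos, div_lt_one (by linarith)]
    linarith
  have hin1 : 1 - 1 / (2 * Real.log 2) < 1 := by
    have : 0 < 1 / (2 * Real.log 2) := by positivity
    linarith
  set s := Real.sqrt (1 - 1 / (2 * Real.log 2)) with hs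
  have hs0 : 0 < s := Real.sqrt_pos.2 hin0
  have hs1 : s < 1 := by
    have := Real.sqrt_lt_sqrt hin0.le hin1
    rwa [Real.sqrt_one] at this
  have hss : s * s = 1 - 1 / (2 * Real.log 2) := Real.mul_self_sqrt hin0.le
  refine ⟨by unfold aF; rw [← hs]; linarith, by unfold aF; rw [← hs]; linarith, ?_⟩
  unfold aF; rw [← hs]
  have : (1 - s)/2 * (1 - (1 - s)/2) = (1 - s*s)/4 := by ring
  rw [this, hss]
  field_simp
  ring

lemma bG_facts : 0 < bG ∧ bG < 1/2 ∧ bG * (1 - bG) = Real.log 2 ^ 2 / 4 := by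
  have h2 := l2gt; have h3 := l2lt; have h1 := l2pos
  have hin0 : (0:ℝ) < 1 - Real.log 2 ^ 2 := by nlinarith
  have hin1 : 1 - Real.log 2 ^ 2 < 1 := by nlinarith
  set s := Real.sqrt (1 - Real.log 2 ^ 2) with hs
  have hs0 : 0 < s := Real.sqrt_pos.2 hin0
  have hs1 : s < 1 := by
    have := Real.sqrt_lt_sqrt hin0.le hin1
    rwa [Real.sqrt_one] at this
  have hss : s * s = 1 - Real.log 2 ^ 2 := Real.mul_self_sqrt hin0.le
  refine ⟨by unfold bG; rw [← hs]; linarith, by unfold bG; rw [← hs]; linarith, ?_⟩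
  unfold bG; rw [← hs]
  have : (1 - s)/2 * (1 - (1 - s)/2) = (1 - s*s)/4 := by ring
  rw [this, hss]
  ring

lemma F_nonneg {p : ℝ} (hp0 : 0 ≤ p) (hp2 : p ≤ 1/2) : 0 ≤ F p := by
  obtain ⟨ha0, ha2, hua⟩ := aF_facts
  have h1 := l2pos
  apply key F psi aF ha0 ha2 (fun q hq0 hq1 => hasDerivAt_F hq0 hq1) ?_ ?_ ?_ ?_ ?_ ?_ hp0 hp2
  · -- continuity
    apply Continuous.continuousOn
    unfold F
    exact Real.binEntropy_continuous.sub (continuous_const.mul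
      (continuous_id.mul (continuous_const.sub continuous_id)))
  · -- psi (1/2) = 0
    unfold psi; norm_num
  · -- MonotoneOn psi [aF, 1/2]
    apply StrictMonoOn.monotoneOn
    apply strictMonoOn_of_deriv_pos (convex_Icc aF (1/2))
    · intro x hx
      have hx0 : 0 < x := lt_of_lt_of_le ha0 hx.1
      have hx1 : x < 1 := by have := hx.2; linarith
      exact (hasDerivAt_psi hx0 hx1).continuousAt.continuousWithinAt
    · rw [interior_Icc]
      intro x hx
      have hx0 : 0 < x := ha0.trans hx.1
      have hx1 : x < 1 := by have := hx.2; linarith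
      rw [(hasDerivAt_psi hx0 hx1).deriv]
      have hux : 1 / (8 * Real.log 2) < x * (1 - x) := by
        rw [← hua]; nlinarith [hx.1, hx.2, ha0]
      have hupos : 0 < x * (1 - x) := by nlinarith
      have h1x : (1:ℝ) - x ≠ 0 := by linarith
      have hinv : (1 - x)⁻¹ + x⁻¹ = (x * (1 - x))⁻¹ := by
        field_simp
        ring
      have h8 : (x * (1 - x))⁻¹ < 8 * Real.log 2 := by
        rw [inv_lt_comm₀ hupos (by positivity)]
        rw [show (8 * Real.log 2)⁻¹ = 1 / (8 * Real.log 2) by rw [one_div]]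
        exact hux
      linarith [hinv ▸ h8]
  · -- StrictConcaveOn [0, aF]
    apply strictConcaveOn_of_deriv2_neg (convex_Icc 0 aF)
    · apply Continuous.continuousOn
      unfold F
      exact Real.binEntropy_continuous.sub (continuous_const.mul
        (continuous_id.mul (continuous_const.sub continuous_id)))
    · rw [interior_Icc]
      intro x hx
      have hx0 : 0 < x := hx.1
      have hx1 : x < 1 := by have := hx.2; linarith
      have heq : deriv F =ᶠ[nhds x] psi := by
        filter_upwards [Ioo_mem_nhds hx0 (show x < 1/2 by linarith [hx.2])] with y hy
        exact (hasDerivAt_F hy.1 (by linarith [hy.2])).deriv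
      have : deriv (deriv F) x = deriv psi x := heq.deriv_eq
      show deriv (deriv F) x < 0
      rw [this, (hasDerivAt_psi hx0 hx1).deriv]
      have hux : x * (1 - x) < 1 / (8 * Real.log 2) := by
        rw [← hua]; nlinarith [hx.1, hx.2, ha2]
      have hupos : 0 < x * (1 - x) := by nlinarith
      have h1x : (1:ℝ) - x ≠ 0 := by linarith
      have hinv : (1 - x)⁻¹ + x⁻¹ = (x * (1 - x))⁻¹ := by
        field_simp
        ring
      have h8 : 8 * Real.log 2 < (x * (1 - x))⁻¹ := by
        rw [lt_inv_comm₀ (by positivity) hupos]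
        rw [show (8 * Real.log 2)⁻¹ = 1 / (8 * Real.log 2) by rw [one_div]]
        exact hux
      linarith [hinv ▸ h8]
  · -- F 0 = 0
    unfold F; simp
  · -- F (1/2) = 0
    unfold F
    rw [show (1:ℝ)/2 = 2⁻¹ by norm_num, Real.binEntropy_two_inv]
    ring

lemma G_nonneg {p : ℝ} (hp0 : 0 ≤ p) (hp2 : p ≤ 1/2) : 0 ≤ G p := by
  obtain ⟨hb0, hb2, hub⟩ := bG_facts
  have h1 := l2pos
  have hGcont : Continuous G := by
    unfold G
    exact (continuous_const.mul (Real.continuous_sqrt.comp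
      (continuous_id.mul (continuous_const.sub continuous_id)))).sub Real.binEntropy_continuous
  apply key G phi bG hb0 hb2 (fun q hq0 hq1 => hasDerivAt_G hq0 hq1) hGcont.continuousOn
    ?_ ?_ ?_ ?_ ?_ hp0 hp2
  · -- phi (1/2) = 0
    unfold phi; norm_num
  · -- MonotoneOn phi [bG, 1/2]
    apply StrictMonoOn.monotoneOn
    apply strictMonoOn_of_deriv_pos (convex_Icc bG (1/2))
    · intro x hx
      have hx0 : 0 < x := lt_of_lt_of_le hb0 hx.1
      have hx1 : x < 1 := by have := hx.2; linarith
      exact (hasDerivAt_phi hx0 hx1).continuousAt.continuousWithinAt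
    · rw [interior_Icc]
      intro x hx
      have hx0 : 0 < x := hb0.trans hx.1
      have hx1 : x < 1 := by have := hx.2; linarith
      rw [(hasDerivAt_phi hx0 hx1).deriv]
      unfold Dphi
      have hupos : 0 < x * (1 - x) := by nlinarith
      have hux : Real.log 2 ^ 2 / 4 < x * (1 - x) := by
        rw [← hub]; nlinarith [hx.1, hx.2, hb0]
      have hsx : Real.log 2 / 2 < Real.sqrt (x * (1 - x)) := by
        rw [show Real.log 2 / 2 = Real.sqrt ((Real.log 2 / 2)^2) from
          (Real.sqrt_sq (by positivity)).symm]
        apply Real.sqrt_lt_sqrt (by positivity)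
        nlinarith
      have hspos : 0 < Real.sqrt (x * (1 - x)) := Real.sqrt_pos.2 hupos
      apply mul_pos (by positivity)
      rw [sub_pos, div_lt_one (by positivity)]
      linarith
  · -- StrictConcaveOn [0, bG]
    apply strictConcaveOn_of_deriv2_neg (convex_Icc 0 bG)
    · exact hGcont.continuousOn
    · rw [interior_Icc]
      intro x hx
      have hx0 : 0 < x := hx.1
      have hx1 : x < 1 := by have := hx.2; linarith
      have heq : deriv G =ᶠ[nhds x] phi := by
        filter_upwards [Ioo_mem_nhds hx0 (show x < 1/2 by linarith [hx.2])] with y hy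
        exact (hasDerivAt_G hy.1 (by linarith [hy.2])).deriv
      have : deriv (deriv G) x = deriv phi x := heq.deriv_eq
      show deriv (deriv G) x < 0
      rw [this, (hasDerivAt_phi hx0 hx1).deriv]
      unfold Dphi
      have hupos : 0 < x * (1 - x) := by nlinarith
      have hux : x * (1 - x) < Real.log 2 ^ 2 / 4 := by
        rw [← hub]; nlinarith [hx.1, hx.2, hb2]
      have hsx : Real.sqrt (x * (1 - x)) < Real.log 2 / 2 := by
        rw [show Real.log 2 / 2 = Real.sqrt ((Real.log 2 / 2)^2) from
          (Real.sqrt_sq (by positivity)).symm]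
        apply Real.sqrt_lt_sqrt (by positivity)
        nlinarith
      have hspos : 0 < Real.sqrt (x * (1 - x)) := Real.sqrt_pos.2 hupos
      apply mul_neg_of_pos_of_neg (by positivity)
      rw [sub_neg, lt_div_iff₀ (by positivity)]
      linarith
  · -- G 0 = 0
    unfold G; simp
  · -- G (1/2) = 0
    unfold G
    rw [show (1:ℝ)/2 * (1 - 1/2) = (1/2)^2 by norm_num, Real.sqrt_sq (by norm_num)]
    rw [show (1:ℝ)/2 = 2⁻¹ by norm_num, Real.binEntropy_two_inv]
    ring

end BE

lemma binEntropy_eq_div (p : ℝ) : binEntropy p = Real.binEntropy p / Real.log 2 := by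
  unfold binEntropy Real.binEntropy Real.logb
  rw [Real.log_inv, Real.log_inv]
  ring

lemma binEntropy_symm (p : ℝ) : binEntropy (1 - p) = binEntropy p := by
  unfold binEntropy
  rw [sub_sub_cancel]
  ring

lemma binEntropy_bounds_half (p : ℝ) (hp0 : 0 ≤ p) (hp2 : p ≤ 1/2) :
    4 * p * (1 - p) ≤ binEntropy p ∧ binEntropy p ≤ 2 * Real.sqrt (p * (1 - p)) := by
  have h1 := BE.l2pos
  have hF := BE.F_nonneg hp0 hp2
  have hG := BE.G_nonneg hp0 hp2
  unfold BE.F at hF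
  unfold BE.G at hG
  rw [binEntropy_eq_div]
  constructor
  · rw [le_div_iff₀ h1]
    nlinarith [hF]
  · rw [div_le_iff₀ h1]
    nlinarith [hG]

/-- For all `p ∈ [0,1]`, `4p(1-p) ≤ H(p) ≤ 2√(p(1-p))`. -/
theorem binEntropy_bounds (p : ℝ) (hp : p ∈ Set.Icc (0:ℝ) 1) :
    4 * p * (1 - p) ≤ binEntropy p ∧ binEntropy p ≤ 2 * Real.sqrt (p * (1 - p)) := by
  obtain ⟨hp0, hp1⟩ := hp
  rcases le_total p (1/2) with h | h
  · exact binEntropy_bounds_half p hp0 h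
  · obtain ⟨h1, h2⟩ := binEntropy_bounds_half (1 - p) (by linarith) (by linarith)
    rw [binEntropy_symm, show (1:ℝ) - (1 - p) = p by ring] at h1 h2
    rw [show (1 - p) * p = p * (1 - p) by ring] at h2
    exact ⟨by linarith, h2⟩
end

section
/- Fix c ∈ (0,1), p ∈ (0,(1-c)/2), and let γ_c = 1/(c·log(e/c)). For binary random variables Y₁,...,Y_k with E[Σᵢ Yᵢ] = pk, there exists a set S ⊆ [k] of size ⌈ck⌉ such that Pr[Yⱼ = 0 for all j ∈ S] > e^{-k/γ_c - 1}. -/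
set_option maxHeartbeats 1000000


open Finset

private lemma weier_aux {ι : Type*} (s : Finset ι) (x : ι → ℝ)
    (h0 : ∀ i ∈ s, 0 ≤ 1 + x i) (hsq : ∀ i ∈ s, ∀ j ∈ s, 0 ≤ x i * x j) :
    1 + ∑ i ∈ s, x i ≤ ∏ i ∈ s, (1 + x i) := by
  induction s using Finset.cons_induction with
  | empty => simp
  | cons a s ha ih =>
    have hxa : 0 ≤ 1 + x a := h0 a (Finset.mem_cons_self a s)
    have hS : 0 ≤ x a * ∑ i ∈ s, x i := by
      rw [Finset.mul_sum]
      exact Finset.sum_nonneg fun i hi =>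
        hsq a (Finset.mem_cons_self a s) i (Finset.mem_cons_of_mem hi)
    have ihs : 1 + ∑ i ∈ s, x i ≤ ∏ i ∈ s, (1 + x i) :=
      ih (fun i hi => h0 i (Finset.mem_cons_of_mem hi))
         (fun i hi j hj => hsq i (Finset.mem_cons_of_mem hi) j (Finset.mem_cons_of_mem hj))
    rw [Finset.prod_cons, Finset.sum_cons]
    calc 1 + (x a + ∑ i ∈ s, x i) ≤ (1 + x a) * (1 + ∑ i ∈ s, x i) := by nlinarith
    _ ≤ (1 + x a) * ∏ i ∈ s, (1 + x i) := mul_le_mul_of_nonneg_left ihs hxa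

private lemma pointwise_aux (m : ℕ) (μ : ℝ) (hm : 1 ≤ m) (hμ : (m : ℝ) - 1 < μ) (n : ℕ) :
    (∏ i ∈ range m, (μ - (i : ℝ))) * (1 + (∑ i ∈ range m, (μ - (i : ℝ))⁻¹) * ((n : ℝ) - μ)) ≤
      (n.descFactorial m : ℝ) := by
  have hpos : ∀ i ∈ range m, 0 < μ - (i : ℝ) := by
    intro i hi
    have hi' : i < m := mem_range.mp hi
    have h1 : (i : ℝ) + 1 ≤ (m : ℝ) := by exact_mod_cast hi'
    linarith
  set B := ∏ i ∈ range m, (μ - (i : ℝ)) with hBdef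
  set t := ∑ i ∈ range m, (μ - (i : ℝ))⁻¹ with htdef
  have hB : 0 < B := Finset.prod_pos hpos
  have ht0 : 0 ≤ t := Finset.sum_nonneg fun i hi => (inv_nonneg).mpr (hpos i hi).le
  by_cases hn : n < m
  · rw [Nat.descFactorial_eq_zero_iff_lt.mpr hn]
    have hnm : (n : ℝ) ≤ (m : ℝ) - 1 := by
      have : (n : ℝ) + 1 ≤ (m : ℝ) := by exact_mod_cast hn
      linarith
    have hmem : m - 1 ∈ range m := mem_range.mpr (by omega)
    have hcast : ((m - 1 : ℕ) : ℝ) = (m : ℝ) - 1 := by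
      have h1 : (1 : ℕ) ≤ m := hm
      push_cast [h1]
      ring
    have htlow : (μ - ((m : ℝ) - 1))⁻¹ ≤ t := by
      have h := Finset.single_le_sum (f := fun i : ℕ => (μ - (i : ℝ))⁻¹)
        (fun i hi => (inv_nonneg).mpr (hpos i hi).le) hmem
      rwa [hcast] at h
    have hμm : 0 < μ - ((m : ℝ) - 1) := by linarith
    have h1 : 1 ≤ t * (μ - ((m : ℝ) - 1)) := by
      have := mul_le_mul_of_nonneg_right htlow hμm.le
      rwa [inv_mul_cancel₀ hμm.ne'] at this
    have h2 : 1 + t * ((n : ℝ) - μ) ≤ 0 := by nlinarith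
    push_cast
    nlinarith
  · push_neg at hn
    have hcast : (n.descFactorial m : ℝ) = ∏ i ∈ range m, ((n : ℝ) - (i : ℝ)) := by
      rw [Nat.descFactorial_eq_prod_range, Nat.cast_prod]
      exact Finset.prod_congr rfl fun i hi =>
        Nat.cast_sub (le_trans (mem_range.mp hi).le hn)
    set x : ℕ → ℝ := fun i => (μ - (i : ℝ))⁻¹ * ((n : ℝ) - μ) with hxdef
    have hfac : ∀ i ∈ range m, (n : ℝ) - (i : ℝ) = (μ - (i : ℝ)) * (1 + x i) := by
      intro i hi
      have h := (hpos i hi).ne'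
      simp only [hxdef]
      rw [mul_add, mul_one, ← mul_assoc, mul_inv_cancel₀ h]
      ring
    have h0 : ∀ i ∈ range m, 0 ≤ 1 + x i := by
      intro i hi
      have hni : (0 : ℝ) ≤ (n : ℝ) - (i : ℝ) := by
        have h1 : i ≤ n := le_trans (mem_range.mp hi).le hn
        have : (i : ℝ) ≤ (n : ℝ) := by exact_mod_cast h1
        linarith
      have h2 := hfac i hi
      nlinarith [hpos i hi]
    have hsq : ∀ i ∈ range m, ∀ j ∈ range m, 0 ≤ x i * x j := by
      intro i hi j hj
      have h1 := hpos i hi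
      have h2 := hpos j hj
      have he : x i * x j = ((n : ℝ) - μ)^2 * ((μ - (i : ℝ))⁻¹ * (μ - (j : ℝ))⁻¹) := by
        simp only [hxdef]; ring
      rw [he]
      exact mul_nonneg (sq_nonneg _)
        (mul_nonneg (inv_nonneg.mpr h1.le) (inv_nonneg.mpr h2.le))
    have hprod : ∏ i ∈ range m, ((n : ℝ) - (i : ℝ)) = B * ∏ i ∈ range m, (1 + x i) := by
      rw [hBdef, ← Finset.prod_mul_distrib]
      exact Finset.prod_congr rfl hfac
    have hwei := weier_aux (range m) x h0 hsq
    have hsx : ∑ i ∈ range m, x i = t * ((n : ℝ) - μ) := by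
      rw [htdef, Finset.sum_mul]
    rw [hcast, hprod, ← hsx]
    exact mul_le_mul_of_nonneg_left hwei hB.le

/-- Lemma 3.6 of Kamath et al. (2021): fix `c ∈ (0,1)`, `p ∈ (0, (1-c)/2)`, and let
`γ_c = 1/(c·log(e/c))` (natural log). For binary random variables `Y₁,…,Y_k` on a
finite probability space with `E[Σᵢ Yᵢ] = pk`, there exists a set `S ⊆ [k]` of size
`⌈ck⌉` such that `Pr[Yⱼ = 0 for all j ∈ S] > e^{-k/γ_c - 1}`. -/
theorem exists_large_unobserved_set {Ω : Type*} [Fintype Ω] (k : ℕ) (hk : 1 ≤ k)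
    (c p : ℝ) (hc : c ∈ Set.Ioo (0:ℝ) 1) (hp : p ∈ Set.Ioo (0:ℝ) ((1 - c) / 2))
    (w : Ω → ℝ) (hw0 : ∀ ω, 0 ≤ w ω) (hw1 : ∑ ω, w ω = 1)
    (Y : Fin k → Ω → ℝ) (hY : ∀ j ω, Y j ω = 0 ∨ Y j ω = 1)
    (hmean : ∑ j : Fin k, ∑ ω, w ω * Y j ω = p * k) :
    ∃ S : Finset (Fin k), S.card = ⌈c * k⌉₊ ∧
      (∑ ω, if ∀ j ∈ S, Y j ω = 0 then w ω else 0) >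
        Real.exp (-(k : ℝ) / (1 / (c * Real.log (Real.exp 1 / c))) - 1) := by
  classical
  obtain ⟨hc0, hc1⟩ := hc
  obtain ⟨hp0, hp1⟩ := hp
  have hkR : (1 : ℝ) ≤ (k : ℝ) := by exact_mod_cast hk
  set L := Real.log (Real.exp 1 / c) with hLdef
  set τ := Real.exp (-(k : ℝ) / (1 / (c * L)) - 1) with hτdef
  set m := ⌈c * (k : ℝ)⌉₊ with hmdef
  have hck0 : 0 < c * (k : ℝ) := by positivity
  have hm1 : 1 ≤ m := Nat.one_le_ceil_iff.mpr hck0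
  have hmk : m ≤ k := by
    rw [hmdef, Nat.ceil_le]
    nlinarith
  have hmub : (m : ℝ) < c * (k : ℝ) + 1 := Nat.ceil_lt_add_one hck0.le
  set μ := (1 - p) * (k : ℝ) with hμdef
  have hμm : (m : ℝ) - 1 < μ := by
    have : c * (k : ℝ) < (1 - p) * (k : ℝ) := by nlinarith
    nlinarith
  -- zero-count
  set Zset : Ω → Finset (Fin k) := fun ω => univ.filter (fun j => Y j ω = 0) with hZdef
  set N : Ω → ℕ := fun ω => (Zset ω).card with hNdef
  have hNval : ∀ ω, (N ω : ℝ) = (k : ℝ) - ∑ j, Y j ω := by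
    intro ω
    have h1 : ∀ j : Fin k, (if Y j ω = 0 then (1 : ℝ) else 0) + Y j ω = 1 := by
      intro j; rcases hY j ω with h | h <;> simp [h]
    have h2 : ∑ j : Fin k, ((if Y j ω = 0 then (1 : ℝ) else 0) + Y j ω) = (k : ℝ) := by
      simp [h1]
    rw [Finset.sum_add_distrib] at h2
    have h3 : ∑ j : Fin k, (if Y j ω = 0 then (1 : ℝ) else 0) = (N ω : ℝ) := by
      rw [Finset.sum_boole, hNdef]
    rw [h3] at h2
    linarith
  have hEN : ∑ ω, w ω * (N ω : ℝ) = μ := by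
    have hswap : ∑ ω, w ω * ∑ j, Y j ω = p * (k : ℝ) := by
      calc ∑ ω, w ω * ∑ j, Y j ω = ∑ ω, ∑ j, w ω * Y j ω :=
            Finset.sum_congr rfl fun ω _ => Finset.mul_sum _ _ _
        _ = ∑ j, ∑ ω, w ω * Y j ω := Finset.sum_comm
        _ = p * (k : ℝ) := hmean
    calc ∑ ω, w ω * (N ω : ℝ) = ∑ ω, (w ω * (k : ℝ) - w ω * ∑ j, Y j ω) :=
          Finset.sum_congr rfl fun ω _ => by rw [hNval ω]; ring
      _ = (∑ ω, w ω) * (k : ℝ) - ∑ ω, w ω * ∑ j, Y j ω := by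
          rw [Finset.sum_sub_distrib, Finset.sum_mul]
      _ = μ := by rw [hw1, hswap, hμdef]; ring
  set B := ∏ i ∈ range m, (μ - (i : ℝ)) with hBdef
  set t := ∑ i ∈ range m, (μ - (i : ℝ))⁻¹ with htdef
  set P := Finset.powersetCard m (univ : Finset (Fin k)) with hPdef
  have hident : ∑ S ∈ P, (∑ ω, if ∀ j ∈ S, Y j ω = 0 then w ω else 0)
      = ∑ ω, w ω * ((N ω).choose m : ℝ) := by
    rw [Finset.sum_comm]
    refine Finset.sum_congr rfl fun ω _ => ?_
    have hfil : P.filter (fun S => ∀ j ∈ S, Y j ω = 0)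
        = Finset.powersetCard m (Zset ω) := by
      ext S
      simp only [hPdef, Finset.mem_filter, Finset.mem_powersetCard, hZdef,
        Finset.subset_iff, Finset.mem_filter, Finset.mem_univ, true_and]
      tauto
    calc ∑ S ∈ P, (if ∀ j ∈ S, Y j ω = 0 then w ω else 0)
        = ∑ S ∈ P.filter (fun S => ∀ j ∈ S, Y j ω = 0), w ω := (Finset.sum_filter _ _).symm
      _ = ((N ω).choose m : ℝ) * w ω := by
          rw [hfil, Finset.sum_const, Finset.card_powersetCard, hNdef, nsmul_eq_mul]
      _ = w ω * ((N ω).choose m : ℝ) := mul_comm _ _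
  have hptws : ∀ n : ℕ, B * (1 + t * ((n : ℝ) - μ)) ≤ (n.choose m : ℝ) * (m.factorial : ℝ) := by
    intro n
    have h := pointwise_aux m μ hm1 hμm n
    rw [Nat.descFactorial_eq_factorial_mul_choose] at h
    push_cast at h
    rw [hBdef, htdef]
    linarith
  have hsumlb : B ≤ (∑ ω, w ω * ((N ω).choose m : ℝ)) * (m.factorial : ℝ) := by
    have h1 : ∑ ω, w ω * (B * (1 + t * ((N ω : ℝ) - μ))) = B := by
      have he : ∀ ω : Ω, w ω * (B * (1 + t * ((N ω : ℝ) - μ)))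
          = B * (w ω) + (B * t) * (w ω * (N ω : ℝ)) - (B * t * μ) * (w ω) := fun ω => by ring
      rw [Finset.sum_congr rfl (fun ω _ => he ω)]
      rw [Finset.sum_sub_distrib, Finset.sum_add_distrib, ← Finset.mul_sum, ← Finset.mul_sum,
        ← Finset.mul_sum, hw1, hEN]
      ring
    have h2 : ∑ ω, w ω * (B * (1 + t * ((N ω : ℝ) - μ)))
        ≤ ∑ ω, w ω * (((N ω).choose m : ℝ) * (m.factorial : ℝ)) :=
      Finset.sum_le_sum fun ω _ => mul_le_mul_of_nonneg_left (hptws (N ω)) (hw0 ω)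
    rw [h1] at h2
    calc B ≤ ∑ ω, w ω * (((N ω).choose m : ℝ) * (m.factorial : ℝ)) := h2
      _ = (∑ ω, w ω * ((N ω).choose m : ℝ)) * (m.factorial : ℝ) := by
          rw [Finset.sum_mul]
          exact Finset.sum_congr rfl fun ω _ => by ring
  -- numeric bound
  have hL1 : 1 ≤ L := by
    rw [hLdef, Real.log_div (Real.exp_ne_zero 1) hc0.ne', Real.log_exp]
    have : Real.log c ≤ 0 := Real.log_nonpos hc0.le hc1.le
    linarith
  have hτ2 : τ ≤ (1 / 2 : ℝ) ^ m := by
    have hlog2 : Real.log 2 ≤ 1 := by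
      have := Real.log_le_sub_one_of_pos (by norm_num : (0:ℝ) < 2); linarith
    have hlog20 : 0 ≤ Real.log 2 := Real.log_nonneg (by norm_num)
    have harg : -(k : ℝ) / (1 / (c * L)) - 1 = -((k : ℝ) * (c * L)) - 1 := by
      rw [one_div, div_eq_mul_inv, inv_inv]
      ring
    have hmono : -((k : ℝ) * (c * L)) - 1 ≤ -((m : ℝ) * Real.log 2) := by
      nlinarith [mul_nonneg hck0.le (sub_nonneg.mpr (le_trans hlog2 hL1)),
        mul_nonneg (sub_nonneg.mpr hmub.le) hlog20]
    have hexp : Real.exp (-((m : ℝ) * Real.log 2)) = (1 / 2 : ℝ) ^ m := by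
      rw [Real.exp_neg, Real.exp_nat_mul, Real.exp_log (by norm_num : (0:ℝ) < 2),
        one_div, inv_pow]
    rw [hτdef, harg, ← hexp]
    exact Real.exp_le_exp.mpr hmono
  have hDcast : ((k.choose m : ℝ)) * (m.factorial : ℝ) = ∏ i ∈ range m, ((k : ℝ) - (i : ℝ)) := by
    have h := Nat.descFactorial_eq_factorial_mul_choose k m
    have h2 : (k.descFactorial m : ℝ) = ∏ i ∈ range m, ((k : ℝ) - (i : ℝ)) := by
      rw [Nat.descFactorial_eq_prod_range, Nat.cast_prod]
      exact Finset.prod_congr rfl fun i hi =>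
        Nat.cast_sub (le_trans (mem_range.mp hi).le hmk)
    rw [← h2, h]
    push_cast
    ring
  have hBD : τ * ((k.choose m : ℝ) * (m.factorial : ℝ)) < B := by
    rw [hDcast]
    have hkpos : ∀ i ∈ range m, (0 : ℝ) < (1 / 2 : ℝ) * ((k : ℝ) - (i : ℝ)) := by
      intro i hi
      have h1 : i < k := lt_of_lt_of_le (mem_range.mp hi) hmk
      have h2 : (i : ℝ) < (k : ℝ) := by exact_mod_cast h1
      nlinarith
    have hstrict : ∀ i ∈ range m, (1 / 2 : ℝ) * ((k : ℝ) - (i : ℝ)) < μ - (i : ℝ) := by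
      intro i hi
      have h1 : (i : ℝ) + 1 ≤ (m : ℝ) := by exact_mod_cast mem_range.mp hi
      have h2 : (i : ℝ) < c * (k : ℝ) := by linarith [hmub]
      rw [hμdef]
      nlinarith
    calc τ * ∏ i ∈ range m, ((k : ℝ) - (i : ℝ))
        ≤ (1 / 2 : ℝ) ^ m * ∏ i ∈ range m, ((k : ℝ) - (i : ℝ)) := by
          refine mul_le_mul_of_nonneg_right hτ2 ?_
          exact Finset.prod_nonneg fun i hi => by nlinarith [hkpos i hi]
      _ = ∏ i ∈ range m, ((1 / 2 : ℝ) * ((k : ℝ) - (i : ℝ))) := by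
          rw [Finset.prod_mul_distrib, Finset.prod_const, Finset.card_range]
      _ < ∏ i ∈ range m, (μ - (i : ℝ)) :=
          Finset.prod_lt_prod_of_nonempty hkpos hstrict
            (Finset.nonempty_range_iff.mpr (by omega))
  have hfin : ∑ _S ∈ P, τ < ∑ S ∈ P, (∑ ω, if ∀ j ∈ S, Y j ω = 0 then w ω else 0) := by
    have hPcard : P.card = k.choose m := by
      rw [hPdef, Finset.card_powersetCard, Finset.card_univ, Fintype.card_fin]
    have hF : (0 : ℝ) < (m.factorial : ℝ) := by exact_mod_cast m.factorial_pos
    have hlt : τ * (k.choose m : ℝ) < ∑ ω, w ω * ((N ω).choose m : ℝ) := by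
      have h := lt_of_lt_of_le hBD hsumlb
      have h2 : (τ * (k.choose m : ℝ)) * (m.factorial : ℝ)
          < (∑ ω, w ω * ((N ω).choose m : ℝ)) * (m.factorial : ℝ) := by
        calc (τ * (k.choose m : ℝ)) * (m.factorial : ℝ)
            = τ * ((k.choose m : ℝ) * (m.factorial : ℝ)) := by ring
          _ < _ := h
      exact lt_of_mul_lt_mul_right h2 hF.le
    rw [Finset.sum_const, hPcard, nsmul_eq_mul, hident]
    calc (k.choose m : ℝ) * τ = τ * (k.choose m : ℝ) := mul_comm _ _
      _ < _ := hlt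
  obtain ⟨S, hSP, hlt⟩ := Finset.exists_lt_of_sum_lt hfin
  exact ⟨S, (Finset.mem_powersetCard.mp hSP).2, hlt⟩
end
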